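/- Let K > 0 and let η : (0,∞)² → [0,∞) be measurable with η(x,y) ≤ K·(x²+y²)^{−3/2} for all x,y > 0; let ν be the Borel measure on (0,∞)² with density η with respect to Lebesgue measure. Let q : (0,∞) → (0,∞] be non-increasing, and set S := {(x,y) ∈ (0,∞)² : q(x) < ∞ and y ≥ q(x)}, x_l := inf{x > 0 : q(x) < ∞}, q(∞) := inf_{x>0} q(x), q⟵(v) := inf{x > 0 : q(x) ≤ v} (with inf ∅ := ∞), and q(u−) := inf_{0<x<u} q(x) for u > 0. Then for every u > x_l and every v > q(∞) with q⟵(v) > 0: ν( S \ ([u,∞) × [v,∞)) ) ≤ (K/2)·( (u − x_l)/q(u−)² + (v − q(∞))/q⟵(v)² ). -/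

import Mathlib

open MeasureTheory Set ENNReal

private lemma lint_tail (K c : ℝ) (hK : 0 ≤ K) (hc : 0 < c) :
    ∫⁻ y in Set.Ici c, ENNReal.ofReal (K * y ^ (-3 : ℝ)) =
      ENNReal.ofReal (K * (c ^ 2)⁻¹ / 2) := by
  rw [← MeasureTheory.restrict_Ioi_eq_restrict_Ici,
    ← MeasureTheory.ofReal_integral_eq_lintegral_ofReal]
  · rw [integral_const_mul, integral_Ioi_rpow_of_lt (by norm_num) hc]
    congr 1
    rw [show (-3 + 1 : ℝ) = -2 by norm_num, Real.rpow_neg hc.le,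
      show ((2 : ℝ)) = ((2 : ℕ) : ℝ) by norm_num, Real.rpow_natCast]
    ring
  · exact (integrableOn_Ioi_rpow_of_lt (by norm_num) hc).const_mul K
  · filter_upwards [ae_restrict_mem measurableSet_Ioi] with y hy
    have hy0 : (0 : ℝ) < y := hc.trans hy
    positivity

private lemma lint_snd (s t : Set ℝ) (g : ℝ → ℝ≥0∞) (hg : Measurable g) :
    ∫⁻ p : ℝ × ℝ in s ×ˢ t, g p.2 = volume s * ∫⁻ y in t, g y := by
  rw [Measure.volume_eq_prod, ← Measure.prod_restrict]
  calc ∫⁻ p : ℝ × ℝ, g p.2 ∂((volume.restrict s).prod (volume.restrict t))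
      = ∫⁻ p : ℝ × ℝ, (fun _ : ℝ => (1 : ℝ≥0∞)) p.1 * g p.2
          ∂((volume.restrict s).prod (volume.restrict t)) := by simp
    _ = (∫⁻ _ in s, (1 : ℝ≥0∞)) * ∫⁻ y in t, g y :=
        lintegral_prod_mul aemeasurable_const hg.aemeasurable
    _ = volume s * ∫⁻ y in t, g y := by simp

private lemma lint_fst (s t : Set ℝ) (g : ℝ → ℝ≥0∞) (hg : Measurable g) :
    ∫⁻ p : ℝ × ℝ in s ×ˢ t, g p.1 = (∫⁻ x in s, g x) * volume t := by
  rw [Measure.volume_eq_prod, ← Measure.prod_restrict]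
  calc ∫⁻ p : ℝ × ℝ, g p.1 ∂((volume.restrict s).prod (volume.restrict t))
      = ∫⁻ p : ℝ × ℝ, g p.1 * (fun _ : ℝ => (1 : ℝ≥0∞)) p.2
          ∂((volume.restrict s).prod (volume.restrict t)) := by simp
    _ = (∫⁻ x in s, g x) * ∫⁻ _ in t, (1 : ℝ≥0∞) :=
        lintegral_prod_mul hg.aemeasurable aemeasurable_const
    _ = (∫⁻ x in s, g x) * volume t := by simp

private lemma fst_zero_null : (volume : Measure (ℝ × ℝ)) {p : ℝ × ℝ | p.1 = 0} = 0 := by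
  have h : {p : ℝ × ℝ | p.1 = 0} = ({0} : Set ℝ) ×ˢ (Set.univ : Set ℝ) := by
    ext ⟨x, y⟩; simp [eq_comm]
  rw [h, Measure.volume_eq_prod, Measure.prod_prod]; simp

private lemma snd_zero_null : (volume : Measure (ℝ × ℝ)) {p : ℝ × ℝ | p.2 = 0} = 0 := by
  have h : {p : ℝ × ℝ | p.2 = 0} = (Set.univ : Set ℝ) ×ˢ ({0} : Set ℝ) := by
    ext ⟨x, y⟩; simp [eq_comm]
  rw [h, Measure.volume_eq_prod, Measure.prod_prod]; simp

/-- Quantitative bound on the exponent measure of the part of the failure set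
`S = {(x,y) : q(x) < ∞, y ≥ q(x)}` removed by truncation away from the axes:
`ν(S \ ([u,∞)×[v,∞))) ≤ (K/2)((u-x_l)/q(u-)² + (v-q(∞))/q⟵(v)²)`. -/
theorem truncated_failure_set_bound
    (K : ℝ) (hK : 0 < K) (η : ℝ × ℝ → ℝ) (hηmeas : Measurable η)
    (hηpos : ∀ x y : ℝ, 0 < x → 0 < y → 0 ≤ η (x, y))
    (hηbd : ∀ x y : ℝ, 0 < x → 0 < y → η (x, y) ≤ K * (x ^ 2 + y ^ 2) ^ (-(3 : ℝ) / 2))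
    (q : ℝ → ℝ≥0∞) (hq : AntitoneOn q (Set.Ioi 0)) (hqpos : ∀ x : ℝ, 0 < x → 0 < q x)
    (hfin : ∃ x : ℝ, 0 < x ∧ q x ≠ ⊤) :
    ∀ u v : ℝ,
      sInf {x : ℝ | 0 < x ∧ q x ≠ ⊤} < u →
      (⨅ x ∈ Set.Ioi (0 : ℝ), q x) < ENNReal.ofReal v →
      (0 : ℝ≥0∞) < (⨅ x ∈ {x : ℝ | 0 < x ∧ q x ≤ ENNReal.ofReal v}, ENNReal.ofReal x) →
      (∫⁻ p in {p : ℝ × ℝ | 0 < p.1 ∧ 0 < p.2 ∧ q p.1 ≠ ⊤ ∧ q p.1 ≤ ENNReal.ofReal p.2} \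
          {p : ℝ × ℝ | u ≤ p.1 ∧ v ≤ p.2}, ENNReal.ofReal (η p)) ≤
        ENNReal.ofReal (K / 2) *
          (ENNReal.ofReal (u - sInf {x : ℝ | 0 < x ∧ q x ≠ ⊤}) /
              (⨅ x ∈ Set.Ioo (0 : ℝ) u, q x) ^ 2 +
            (ENNReal.ofReal v - ⨅ x ∈ Set.Ioi (0 : ℝ), q x) /
              (⨅ x ∈ {x : ℝ | 0 < x ∧ q x ≤ ENNReal.ofReal v}, ENNReal.ofReal x) ^ 2) := by
  intro u v hu hv hd
  set S1 := {x : ℝ | 0 < x ∧ q x ≠ ⊤} with hS1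
  set xl := sInf S1 with hxl
  set c := ⨅ x ∈ Set.Ioo (0 : ℝ) u, q x with hcdef
  set m := ⨅ x ∈ Set.Ioi (0 : ℝ), q x with hmdef
  set S2 := {x : ℝ | 0 < x ∧ q x ≤ ENNReal.ofReal v} with hS2
  set d := ⨅ x ∈ S2, ENNReal.ofReal x with hddef
  have hS1ne : S1.Nonempty := hfin
  have hS1bdd : BddBelow S1 := ⟨0, fun x hx => hx.1.le⟩
  have hxl0 : 0 ≤ xl := le_csInf hS1ne fun x hx => hx.1.le
  have hu0 : 0 < u := lt_of_le_of_lt hxl0 hu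
  -- facts about c
  obtain ⟨x1, hx1S, hx1u⟩ := (csInf_lt_iff hS1bdd hS1ne).1 hu
  have hcle : c ≤ q x1 := iInf₂_le x1 ⟨hx1S.1, hx1u⟩
  have hcne : c ≠ ⊤ := ne_top_of_le_ne_top hx1S.2 hcle
  have hqu_le_c : q u ≤ c := le_iInf₂ fun x hx => hq hx.1 (Set.mem_Ioi.2 hu0) hx.2.le
  have hcpos : 0 < c := lt_of_lt_of_le (hqpos u hu0) hqu_le_c
  set c' := c.toReal with hc'def
  have hc'pos : 0 < c' := ENNReal.toReal_pos hcpos.ne' hcne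
  have hcofReal : c = ENNReal.ofReal c' := (ENNReal.ofReal_toReal hcne).symm
  -- facts about m and v
  have hmne : m ≠ ⊤ := hv.ne_top
  set m' := m.toReal with hm'def
  have hm0 : 0 ≤ m' := ENNReal.toReal_nonneg
  have hmofReal : m = ENNReal.ofReal m' := (ENNReal.ofReal_toReal hmne).symm
  have hv0 : 0 < v := by
    by_contra h
    push_neg at h
    rw [ENNReal.ofReal_eq_zero.2 h] at hv
    exact (not_lt_bot) hv
  have hm'v : m' < v := by
    rw [hmofReal] at hv
    exact (ENNReal.ofReal_lt_ofReal_iff hv0).1 hv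
  -- facts about d
  obtain ⟨x2, hx2pos, hx2v⟩ : ∃ x ∈ Set.Ioi (0 : ℝ), q x < ENNReal.ofReal v := by
    have := hv
    rw [hmdef] at this
    simpa only [iInf_lt_iff, exists_prop] using this
  have hx2S2 : x2 ∈ S2 := ⟨hx2pos, hx2v.le⟩
  have hdle : d ≤ ENNReal.ofReal x2 := iInf₂_le x2 hx2S2
  have hdne : d ≠ ⊤ := ne_top_of_le_ne_top ENNReal.ofReal_ne_top hdle
  set d' := d.toReal with hd'def
  have hd'pos : 0 < d' := ENNReal.toReal_pos hd.ne' hdne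
  have hdofReal : d = ENNReal.ofReal d' := (ENNReal.ofReal_toReal hdne).symm
  -- the two covering rectangles
  set A := Set.Ico xl u ×ˢ Set.Ici c' with hA
  set B := Set.Ici d' ×ˢ Set.Ico m' v with hB
  have hsub : {p : ℝ × ℝ | 0 < p.1 ∧ 0 < p.2 ∧ q p.1 ≠ ⊤ ∧ q p.1 ≤ ENNReal.ofReal p.2} \
      {p : ℝ × ℝ | u ≤ p.1 ∧ v ≤ p.2} ⊆ A ∪ B := by
    rintro ⟨x, y⟩ ⟨⟨hx, hy, hqx, hqxy⟩, hnot⟩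
    simp only [Set.mem_setOf_eq, not_and, not_le] at hnot
    by_cases hxu : x < u
    · left
      refine Set.mem_prod.2 ⟨⟨csInf_le hS1bdd ⟨hx, hqx⟩, hxu⟩, ?_⟩
      have h1 : c ≤ ENNReal.ofReal y := le_trans (iInf₂_le x ⟨hx, hxu⟩) hqxy
      rw [hcofReal] at h1
      exact (ENNReal.ofReal_le_ofReal_iff hy.le).1 h1
    · push_neg at hxu
      have hyv : y < v := hnot hxu
      right
      refine Set.mem_prod.2 ⟨?_, ?_, hyv⟩
      · have hxS2 : x ∈ S2 := ⟨hx, le_trans hqxy (ENNReal.ofReal_le_ofReal hyv.le)⟩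
        have h1 : d ≤ ENNReal.ofReal x := iInf₂_le x hxS2
        rw [hdofReal] at h1
        exact (ENNReal.ofReal_le_ofReal_iff hx.le).1 h1
      · have h1 : m ≤ ENNReal.ofReal y := le_trans (iInf₂_le x hx) hqxy
        rw [hmofReal] at h1
        exact (ENNReal.ofReal_le_ofReal_iff hy.le).1 h1
  refine le_trans (lintegral_mono_set hsub) ?_
  refine le_trans (lintegral_union_le _ _ _) ?_
  have huxl : (0 : ℝ) ≤ u - xl := sub_nonneg.2 hu.le
  -- bound on A
  have bdA : ∫⁻ p in A, ENNReal.ofReal (η p) ≤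
      ENNReal.ofReal (K / 2) * (ENNReal.ofReal (u - xl) / c ^ 2) := by
    have hgmeas : Measurable fun y : ℝ => ENNReal.ofReal (K * y ^ (-3 : ℝ)) := by fun_prop
    have step1 : ∫⁻ p in A, ENNReal.ofReal (η p) ≤
        ∫⁻ p in A, ENNReal.ofReal (K * p.2 ^ (-3 : ℝ)) := by
      refine setLIntegral_mono_ae (hgmeas.comp measurable_snd).aemeasurable ?_
      filter_upwards [measure_eq_zero_iff_ae_notMem.1 fst_zero_null] with p hp hpA
      have hx : 0 < p.1 := lt_of_le_of_ne (hxl0.trans hpA.1.1) (Ne.symm hp)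
      have hy : 0 < p.2 := hc'pos.trans_le hpA.2
      apply ENNReal.ofReal_le_ofReal
      calc η p ≤ K * (p.1 ^ 2 + p.2 ^ 2) ^ (-(3 : ℝ) / 2) := hηbd _ _ hx hy
        _ ≤ K * p.2 ^ (-3 : ℝ) := by
            have h1 : ((p.2 ^ 2 : ℝ)) ^ (-(3 : ℝ) / 2) = p.2 ^ (-3 : ℝ) := by
              rw [← Real.rpow_natCast p.2 2, ← Real.rpow_mul hy.le]
              norm_num
            have h2 : (p.1 ^ 2 + p.2 ^ 2 : ℝ) ^ (-(3 : ℝ) / 2) ≤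
                ((p.2 ^ 2 : ℝ)) ^ (-(3 : ℝ) / 2) :=
              Real.rpow_le_rpow_of_nonpos (by positivity) (by nlinarith) (by norm_num)
            rw [h1] at h2
            exact mul_le_mul_of_nonneg_left h2 hK.le
    calc ∫⁻ p in A, ENNReal.ofReal (η p) ≤
        ∫⁻ p in A, ENNReal.ofReal (K * p.2 ^ (-3 : ℝ)) := step1
      _ = volume (Set.Ico xl u) * ∫⁻ y in Set.Ici c', ENNReal.ofReal (K * y ^ (-3 : ℝ)) :=
          lint_snd _ _ _ hgmeas
      _ = ENNReal.ofReal (u - xl) * ENNReal.ofReal (K * (c' ^ 2)⁻¹ / 2) := by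
          rw [Real.volume_Ico, lint_tail K c' hK.le hc'pos]
      _ = ENNReal.ofReal (K / 2) * (ENNReal.ofReal (u - xl) / c ^ 2) := by
          rw [hcofReal, ← ENNReal.ofReal_pow hc'pos.le,
            ← ENNReal.ofReal_div_of_pos (by positivity),
            ← ENNReal.ofReal_mul huxl, ← ENNReal.ofReal_mul (by positivity)]
          congr 1
          field_simp
  -- bound on B
  have bdB : ∫⁻ p in B, ENNReal.ofReal (η p) ≤
      ENNReal.ofReal (K / 2) * ((ENNReal.ofReal v - m) / d ^ 2) := by
    have hgmeas : Measurable fun x : ℝ => ENNReal.ofReal (K * x ^ (-3 : ℝ)) := by fun_prop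
    have step1 : ∫⁻ p in B, ENNReal.ofReal (η p) ≤
        ∫⁻ p in B, ENNReal.ofReal (K * p.1 ^ (-3 : ℝ)) := by
      refine setLIntegral_mono_ae (hgmeas.comp measurable_fst).aemeasurable ?_
      filter_upwards [measure_eq_zero_iff_ae_notMem.1 snd_zero_null] with p hp hpB
      have hx : 0 < p.1 := hd'pos.trans_le hpB.1
      have hy : 0 < p.2 := lt_of_le_of_ne (hm0.trans hpB.2.1) (Ne.symm hp)
      apply ENNReal.ofReal_le_ofReal
      calc η p ≤ K * (p.1 ^ 2 + p.2 ^ 2) ^ (-(3 : ℝ) / 2) := hηbd _ _ hx hy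
        _ ≤ K * p.1 ^ (-3 : ℝ) := by
            have h1 : ((p.1 ^ 2 : ℝ)) ^ (-(3 : ℝ) / 2) = p.1 ^ (-3 : ℝ) := by
              rw [← Real.rpow_natCast p.1 2, ← Real.rpow_mul hx.le]
              norm_num
            have h2 : (p.1 ^ 2 + p.2 ^ 2 : ℝ) ^ (-(3 : ℝ) / 2) ≤
                ((p.1 ^ 2 : ℝ)) ^ (-(3 : ℝ) / 2) :=
              Real.rpow_le_rpow_of_nonpos (by positivity) (by nlinarith) (by norm_num)
            rw [h1] at h2
            exact mul_le_mul_of_nonneg_left h2 hK.le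
    calc ∫⁻ p in B, ENNReal.ofReal (η p) ≤
        ∫⁻ p in B, ENNReal.ofReal (K * p.1 ^ (-3 : ℝ)) := step1
      _ = (∫⁻ x in Set.Ici d', ENNReal.ofReal (K * x ^ (-3 : ℝ))) * volume (Set.Ico m' v) :=
          lint_fst _ _ _ hgmeas
      _ = ENNReal.ofReal (K * (d' ^ 2)⁻¹ / 2) * ENNReal.ofReal (v - m') := by
          rw [Real.volume_Ico, lint_tail K d' hK.le hd'pos]
      _ = ENNReal.ofReal (K / 2) * ((ENNReal.ofReal v - m) / d ^ 2) := by
          rw [hmofReal, hdofReal, ← ENNReal.ofReal_pow hd'pos.le,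
            ← ENNReal.ofReal_sub v hm0,
            ← ENNReal.ofReal_div_of_pos (by positivity),
            ← ENNReal.ofReal_mul (by positivity), ← ENNReal.ofReal_mul (by positivity)]
          congr 1
          ring
  calc (∫⁻ p in A, ENNReal.ofReal (η p)) + ∫⁻ p in B, ENNReal.ofReal (η p) ≤
      ENNReal.ofReal (K / 2) * (ENNReal.ofReal (u - xl) / c ^ 2) +
        ENNReal.ofReal (K / 2) * ((ENNReal.ofReal v - m) / d ^ 2) := add_le_add bdA bdB
    _ = _ := by rw [mul_add]
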